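/- Shuffle decomposition of products of simplex integrals: let E, F, G be complex Banach spaces, B : E × F → G a continuous bilinear map, p, q ≥ 1, F₀ : ℝ^p → E and G₀ : ℝ^q → F continuous, and s ≤ t. Then B(I^p_{s,t}(F₀), I^q_{s,t}(G₀)) = Σ_{η ∈ Sh(p,q)} I^{p+q}_{s,t}((w_1,…,w_{p+q}) ↦ B(F₀(w_{η(1)},…,w_{η(p)}), G₀(w_{η(p+1)},…,w_{η(p+q)}))). -/

import Mathlib

/-- `η ∈ S_N` is an `(a, N-a)`-shuffle: it is strictly increasing on the first `a`
positions and on the remaining positions (zero-based positions). -/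
def IsShuffle {N : ℕ} (a : ℕ) (η : Equiv.Perm (Fin N)) : Prop :=
  ∀ i j : Fin N, i < j → ((j : ℕ) < a ∨ a ≤ (i : ℕ)) → η i < η j

instance {N a : ℕ} : DecidablePred (fun η : Equiv.Perm (Fin N) => IsShuffle a η) :=
  fun η => by unfold IsShuffle; infer_instance

/-- The finite set `Sh(a, N-a)` of `(a, N-a)`-shuffles inside `S_N`. -/
def shuffles (N a : ℕ) : Finset (Equiv.Perm (Fin N)) :=
  Finset.univ.filter (fun η => IsShuffle a η)

/-- The iterated integral `I^n_{s,t}(g)` over the simplex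
`Δ^n_{s,t} = {s < t_n < ⋯ < t_1 < t}`, as a nested Bochner integral. -/
noncomputable def simplexIntegral {E : Type*} [NormedAddCommGroup E] [NormedSpace ℝ E] :
    (n : ℕ) → ℝ → ℝ → ((Fin n → ℝ) → E) → E
  | 0, _, _, g => g Fin.elim0
  | n + 1, s, t, g => ∫ r in s..t, simplexIntegral n s r (fun ts => g (Fin.cons r ts))

open Equiv Finset

section Aux

lemma simplexIntegral_zero' {E : Type*} [NormedAddCommGroup E] [NormedSpace ℝ E]
    (s t : ℝ) (g : (Fin 0 → ℝ) → E) : simplexIntegral 0 s t g = g Fin.elim0 := rfl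

lemma simplexIntegral_succ' {E : Type*} [NormedAddCommGroup E] [NormedSpace ℝ E]
    (n : ℕ) (s t : ℝ) (g : (Fin (n + 1) → ℝ) → E) :
    simplexIntegral (n + 1) s t g
      = ∫ r in s..t, simplexIntegral n s r (fun ts => g (Fin.cons r ts)) := rfl

variable {E : Type*} [NormedAddCommGroup E] [NormedSpace ℝ E] [CompleteSpace E]

lemma continuous_cons_pair {n : ℕ} :
    Continuous fun p : ℝ × (Fin n → ℝ) => (Fin.cons p.1 p.2 : Fin (n + 1) → ℝ) := by
  apply continuous_pi
  intro i
  refine Fin.cases ?_ ?_ i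
  · simpa using continuous_fst
  · intro j
    simp only [Fin.cons_succ]
    exact (continuous_apply j).comp continuous_snd

lemma continuous_cons_right {n : ℕ} (r : ℝ) :
    Continuous fun ts : Fin n → ℝ => (Fin.cons r ts : Fin (n + 1) → ℝ) :=
  continuous_cons_pair.comp (continuous_const.prodMk continuous_id)

lemma continuous_simplexIntegral_param {α : Type*} [TopologicalSpace α]
    [FirstCountableTopology α] [LocallyCompactSpace α] (n : ℕ) (s : ℝ)
    (g : α → (Fin n → ℝ) → E)
    (hg : Continuous fun p : α × (Fin n → ℝ) => g p.1 p.2) :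
    Continuous fun p : α × ℝ => simplexIntegral n s p.2 (g p.1) := by
  induction n generalizing α with
  | zero =>
      show Continuous fun p : α × ℝ => g p.1 Fin.elim0
      have : Continuous fun p : α × ℝ => (p.1, (Fin.elim0 : Fin 0 → ℝ)) :=
        continuous_fst.prodMk continuous_const
      exact hg.comp this
  | succ n ih =>
      have h1 : Continuous fun q : (α × ℝ) × (Fin n → ℝ) => g q.1.1 (Fin.cons q.1.2 q.2) := by
        have hm : Continuous fun q : (α × ℝ) × (Fin n → ℝ) =>
            ((q.1.1, Fin.cons q.1.2 q.2) : α × (Fin (n + 1) → ℝ)) :=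
          (continuous_fst.comp continuous_fst).prodMk
            (continuous_cons_pair.comp ((continuous_snd.comp continuous_fst).prodMk
              continuous_snd))
        exact hg.comp hm
      have h2 := ih (α := α × ℝ) (fun q ts => g q.1 (Fin.cons q.2 ts)) h1
      have h3 : Continuous fun z : (α × ℝ) × ℝ =>
          simplexIntegral n s z.2 (fun ts => g z.1.1 (Fin.cons z.2 ts)) := by
        exact h2.comp (((continuous_fst.comp continuous_fst).prodMk continuous_snd).prodMk
          continuous_snd)
      have := intervalIntegral.continuous_parametric_intervalIntegral_of_continuous
        (μ := MeasureTheory.volume) (X := α × ℝ)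
        (f := fun (x : α × ℝ) (r : ℝ) =>
          simplexIntegral n s r (fun ts => g x.1 (Fin.cons r ts)))
        (a₀ := s)
        (by exact h3)
        (s := fun p : α × ℝ => p.2) continuous_snd
      exact this

lemma continuous_simplexIntegral_inner {n : ℕ} (s : ℝ) (g : (Fin (n + 1) → ℝ) → E)
    (hg : Continuous g) :
    Continuous fun r : ℝ => simplexIntegral n s r (fun ts => g (Fin.cons r ts)) := by
  have := continuous_simplexIntegral_param (α := ℝ) n s
    (fun r ts => g (Fin.cons r ts)) (hg.comp continuous_cons_pair)
  exact this.comp (continuous_id.prodMk continuous_id)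

lemma hasDerivAt_simplexIntegral (n : ℕ) (s : ℝ) (g : (Fin (n + 1) → ℝ) → E)
    (hg : Continuous g) (t : ℝ) :
    HasDerivAt (fun u => simplexIntegral (n + 1) s u g)
      (simplexIntegral n s t (fun ts => g (Fin.cons t ts))) t := by
  have hc := continuous_simplexIntegral_inner s g hg
  have := intervalIntegral.integral_hasDerivAt_right
    (f := fun r => simplexIntegral n s r (fun ts => g (Fin.cons r ts)))
    (hc.intervalIntegrable s t) hc.stronglyMeasurable.stronglyMeasurableAtFilter
    hc.continuousAt
  exact this

lemma simplexIntegral_same (n : ℕ) (s : ℝ) (g : (Fin (n + 1) → ℝ) → E) :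
    simplexIntegral (n + 1) s s g = 0 := by
  rw [simplexIntegral_succ', intervalIntegral.integral_same]

lemma map_simplexIntegral {G' : Type*} [NormedAddCommGroup G'] [NormedSpace ℝ G'] [CompleteSpace G']
    (T : E →L[ℝ] G') (n : ℕ) (s t : ℝ) (g : (Fin n → ℝ) → E) (hg : Continuous g) :
    T (simplexIntegral n s t g) = simplexIntegral n s t (fun w => T (g w)) := by
  induction n generalizing t with
  | zero => rfl
  | succ n ih =>
      rw [simplexIntegral_succ', simplexIntegral_succ',
        ← T.intervalIntegral_comp_comm
          ((continuous_simplexIntegral_inner s g hg).intervalIntegrable s t)]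
      apply intervalIntegral.integral_congr
      intro r _
      exact ih r (fun ts => g (Fin.cons r ts)) (hg.comp (continuous_cons_right r))

end Aux


section Comb

/-- Insert a new point: the permutation of `Fin (n+1)` sending `k` to `0` and
`k.succAbove x` to `(σ x).succ`. -/
def extendPerm {n : ℕ} (k : Fin (n + 1)) (σ : Equiv.Perm (Fin n)) : Equiv.Perm (Fin (n + 1)) :=
  (finSuccEquiv' k).trans ((σ.optionCongr).trans (finSuccEquiv' 0).symm)

/-- Inverse operation to `extendPerm k` (on permutations sending `k` to `0`). -/
def shrinkPerm {n : ℕ} (k : Fin (n + 1)) (η : Equiv.Perm (Fin (n + 1))) : Equiv.Perm (Fin n) :=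
  Equiv.removeNone ((finSuccEquiv' k).symm.trans (η.trans (finSuccEquiv' 0)))

@[simp] lemma extendPerm_at {n : ℕ} (k : Fin (n + 1)) (σ : Equiv.Perm (Fin n)) :
    extendPerm k σ k = 0 := by
  simp [extendPerm, finSuccEquiv'_at]

@[simp] lemma extendPerm_succAbove {n : ℕ} (k : Fin (n + 1)) (σ : Equiv.Perm (Fin n))
    (x : Fin n) : extendPerm k σ (k.succAbove x) = (σ x).succ := by
  simp [extendPerm, finSuccEquiv'_succAbove, finSuccEquiv'_symm_some]

lemma shrinkPerm_spec {n : ℕ} {k : Fin (n + 1)} {η : Equiv.Perm (Fin (n + 1))}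
    (hk : η k = 0) (x : Fin n) : η (k.succAbove x) = (shrinkPerm k η x).succ := by
  have hne : η (k.succAbove x) ≠ 0 := by
    rw [← hk]
    intro h
    exact Fin.succAbove_ne k x (η.injective h)
  have h1 : ((finSuccEquiv' k).symm.trans (η.trans (finSuccEquiv' 0))) (some x)
      = finSuccEquiv' 0 (η (k.succAbove x)) := by
    simp [finSuccEquiv'_symm_some]
  have h2 : ∃ y, finSuccEquiv' 0 (η (k.succAbove x)) = some y := by
    rcases Fin.eq_zero_or_eq_succ (η (k.succAbove x)) with h | ⟨y, hy⟩
    · exact absurd h hne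
    · refine ⟨y, ?_⟩
      rw [hy, ← Fin.zero_succAbove, finSuccEquiv'_succAbove]
  have h3 := Equiv.removeNone_some
    (e := (finSuccEquiv' k).symm.trans (η.trans (finSuccEquiv' 0))) (x := x)
    (by rw [h1]; exact h2)
  rw [h1] at h3
  have h4 := congrArg (finSuccEquiv' 0).symm h3
  simp only [Equiv.symm_apply_apply, finSuccEquiv'_symm_some, Fin.zero_succAbove] at h4
  exact h4.symm

lemma shrink_extend {n : ℕ} (k : Fin (n + 1)) (σ : Equiv.Perm (Fin n)) :
    shrinkPerm k (extendPerm k σ) = σ := by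
  apply Equiv.ext
  intro x
  have h := shrinkPerm_spec (k := k) (η := extendPerm k σ) (extendPerm_at k σ) x
  rw [extendPerm_succAbove] at h
  exact (Fin.succ_injective _ h.symm)

lemma extend_shrink {n : ℕ} {k : Fin (n + 1)} {η : Equiv.Perm (Fin (n + 1))}
    (hk : η k = 0) : extendPerm k (shrinkPerm k η) = η := by
  apply Equiv.ext
  intro y
  rcases eq_or_ne y k with rfl | hy
  · rw [extendPerm_at, hk]
  · obtain ⟨x, rfl⟩ := Fin.exists_succAbove_eq hy
    rw [extendPerm_succAbove, shrinkPerm_spec hk]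

lemma succAbove_val_cases {n : ℕ} (k : Fin (n + 1)) (x : Fin n) :
    ((k.succAbove x : Fin (n + 1)) : ℕ) = (x : ℕ) ∧ (x : ℕ) < (k : ℕ) ∨
      ((k.succAbove x : Fin (n + 1)) : ℕ) = (x : ℕ) + 1 ∧ (k : ℕ) ≤ (x : ℕ) := by
  rcases lt_or_ge (x : ℕ) (k : ℕ) with h | h
  · left
    refine ⟨?_, h⟩
    rw [Fin.succAbove_of_castSucc_lt]
    · rfl
    · rwa [Fin.lt_def, Fin.coe_castSucc]
  · right
    refine ⟨?_, h⟩
    rw [Fin.succAbove_of_le_castSucc]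
    · rfl
    · rwa [Fin.le_def, Fin.coe_castSucc]

lemma mem_shuffles {N a : ℕ} {η : Equiv.Perm (Fin N)} :
    η ∈ shuffles N a ↔ IsShuffle a η := by
  simp [shuffles]

lemma apply_ne_zero {N : ℕ} (η : Equiv.Perm (Fin (N + 1))) {i j : Fin (N + 1)}
    (h0 : η i = 0) (hij : j ≠ i) : η j ≠ 0 := fun h => hij (η.injective (h.trans h0.symm))

lemma isShuffle_extend_zero {n a : ℕ} {σ : Equiv.Perm (Fin n)} (hσ : IsShuffle a σ) :
    IsShuffle (a + 1) (extendPerm 0 σ) := by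
  intro i j hij hcond
  rcases Fin.eq_zero_or_eq_succ i with rfl | ⟨x, rfl⟩
  · rw [extendPerm_at]
    exact Fin.pos_iff_ne_zero.mpr
      (apply_ne_zero _ (extendPerm_at 0 σ) (by exact fun h => absurd (h ▸ hij) (lt_irrefl _)))
  · rcases Fin.eq_zero_or_eq_succ j with rfl | ⟨y, rfl⟩
    · exact absurd hij (Fin.not_lt_zero _)
    · rw [← Fin.zero_succAbove x, ← Fin.zero_succAbove y, extendPerm_succAbove,
        extendPerm_succAbove, Fin.succ_lt_succ_iff]
      refine hσ x y (by rwa [Fin.succ_lt_succ_iff] at hij) ?_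
      simp only [Fin.val_succ] at hcond
      omega

lemma isShuffle_extend_mid {n a : ℕ} (ha : a < n + 1) {σ : Equiv.Perm (Fin n)}
    (hσ : IsShuffle a σ) : IsShuffle a (extendPerm ⟨a, ha⟩ σ) := by
  set k : Fin (n + 1) := ⟨a, ha⟩ with hkdef
  have hkv : (k : ℕ) = a := rfl
  intro i j hij hcond
  rcases eq_or_ne j k with rfl | hj
  · exfalso
    have hiv : (i : ℕ) < a := by
      have := hij
      rw [Fin.lt_def, hkv] at this
      exact this
    rcases hcond with h | h
    · rw [hkv] at h; omega
    · omega
  rcases eq_or_ne i k with rfl | hi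
  · rw [extendPerm_at]
    exact Fin.pos_iff_ne_zero.mpr (apply_ne_zero _ (extendPerm_at k σ) hj)
  · obtain ⟨x, rfl⟩ := Fin.exists_succAbove_eq hi
    obtain ⟨y, rfl⟩ := Fin.exists_succAbove_eq hj
    rw [extendPerm_succAbove, extendPerm_succAbove, Fin.succ_lt_succ_iff]
    refine hσ x y (by rwa [Fin.succAbove_lt_succAbove_iff] at hij) ?_
    rcases succAbove_val_cases k x with ⟨hx1, hx2⟩ | ⟨hx1, hx2⟩ <;>
      rcases succAbove_val_cases k y with ⟨hy1, hy2⟩ | ⟨hy1, hy2⟩ <;>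
      rw [hkv] at * <;> omega

lemma isShuffle_shrink_zero {n a : ℕ} {η : Equiv.Perm (Fin (n + 1))}
    (hη : IsShuffle (a + 1) η) (h0 : η 0 = 0) : IsShuffle a (shrinkPerm 0 η) := by
  intro x y hxy hcond
  have kx := shrinkPerm_spec (k := 0) h0 x
  have ky := shrinkPerm_spec (k := 0) h0 y
  rw [Fin.zero_succAbove] at kx ky
  rw [← Fin.succ_lt_succ_iff, ← kx, ← ky]
  refine hη x.succ y.succ (Fin.succ_lt_succ_iff.mpr hxy) ?_
  simp only [Fin.val_succ]
  omega

lemma isShuffle_shrink_mid {n a : ℕ} (ha : a < n + 1) {η : Equiv.Perm (Fin (n + 1))}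
    (hη : IsShuffle a η) (h0 : η ⟨a, ha⟩ = 0) : IsShuffle a (shrinkPerm ⟨a, ha⟩ η) := by
  set k : Fin (n + 1) := ⟨a, ha⟩ with hkdef
  have hkv : (k : ℕ) = a := rfl
  intro x y hxy hcond
  have kx := shrinkPerm_spec (k := k) h0 x
  have ky := shrinkPerm_spec (k := k) h0 y
  rw [← Fin.succ_lt_succ_iff, ← kx, ← ky]
  refine hη _ _ (Fin.succAbove_lt_succAbove_iff.mpr hxy) ?_
  rcases succAbove_val_cases k x with ⟨hx1, hx2⟩ | ⟨hx1, hx2⟩ <;>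
    rcases succAbove_val_cases k y with ⟨hy1, hy2⟩ | ⟨hy1, hy2⟩ <;>
    rw [hkv] at * <;> omega

lemma shuffle_cases {n p : ℕ} (hp : 0 < p) (hpn : p < n + 1) {η : Equiv.Perm (Fin (n + 1))}
    (hη : IsShuffle p η) : η 0 = 0 ∨ η ⟨p, hpn⟩ = 0 := by
  set k := η.symm 0 with hk
  have hk0 : η k = 0 := η.apply_symm_apply 0
  rcases lt_or_ge (k : ℕ) p with h | h
  · left
    rcases eq_or_ne k 0 with he | hne
    · exact he ▸ hk0
    · exfalso
      have := hη 0 k (Fin.pos_iff_ne_zero.mpr hne) (Or.inl h)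
      rw [hk0] at this
      exact Fin.not_lt_zero _ this
  · right
    rcases eq_or_ne k ⟨p, hpn⟩ with he | hne
    · exact he ▸ hk0
    · exfalso
      have hlt : (⟨p, hpn⟩ : Fin (n + 1)) < k := by
        rw [Fin.lt_def]
        have h1 : (k : ℕ) ≠ p := fun hv => hne (Fin.ext hv)
        have h2 : ((⟨p, hpn⟩ : Fin (n + 1)) : ℕ) = p := rfl
        omega
      have := hη ⟨p, hpn⟩ k hlt (Or.inr (le_refl p))
      rw [hk0] at this
      exact Fin.not_lt_zero _ this

lemma filter_not_zero_eq {n p : ℕ} (hp : 0 < p) (hpn : p < n + 1) :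
    (shuffles (n + 1) p).filter (fun η => ¬ η 0 = 0)
      = (shuffles (n + 1) p).filter (fun η => η ⟨p, hpn⟩ = 0) := by
  apply Finset.filter_congr
  intro η hη
  have hIs := mem_shuffles.mp hη
  constructor
  · intro h
    rcases shuffle_cases hp hpn hIs with h0 | hk
    · exact absurd h0 h
    · exact hk
  · intro hk h0
    have : (0 : Fin (n + 1)) = ⟨p, hpn⟩ := η.injective (h0.trans hk.symm)
    have := congrArg Fin.val this
    simp at this
    omega

lemma sum_shuffle_filter_eq {M' : Type*} [AddCommMonoid M'] {n a b : ℕ} (k : Fin (n + 1))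
    (h1 : ∀ σ : Equiv.Perm (Fin n), IsShuffle a σ → IsShuffle b (extendPerm k σ))
    (h2 : ∀ η : Equiv.Perm (Fin (n + 1)), IsShuffle b η → η k = 0 →
      IsShuffle a (shrinkPerm k η))
    (f : Equiv.Perm (Fin (n + 1)) → M') :
    ∑ η ∈ (shuffles (n + 1) b).filter (fun η => η k = 0), f η
      = ∑ σ ∈ shuffles n a, f (extendPerm k σ) := by
  refine Finset.sum_bij' (fun η _ => shrinkPerm k η) (fun σ _ => extendPerm k σ)
    ?_ ?_ ?_ ?_ ?_
  · intro η hη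
    rw [Finset.mem_filter] at hη
    exact mem_shuffles.mpr (h2 η (mem_shuffles.mp hη.1) hη.2)
  · intro σ hσ
    rw [Finset.mem_filter]
    exact ⟨mem_shuffles.mpr (h1 σ (mem_shuffles.mp hσ)), extendPerm_at k σ⟩
  · intro η hη
    exact extend_shrink (Finset.mem_filter.mp hη).2
  · intro σ _
    exact shrink_extend k σ
  · intro η hη
    rw [extend_shrink (Finset.mem_filter.mp hη).2]

lemma perm_eq_one_of_strictMono {N : ℕ} (η : Equiv.Perm (Fin N)) (h : StrictMono ⇑η) :
    η = 1 := by
  have hle : ∀ (f : Equiv.Perm (Fin N)), StrictMono ⇑f → ∀ i : Fin N, (i : ℕ) ≤ (f i : ℕ) := by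
    intro f hf i
    obtain ⟨m, hm⟩ : ∃ m : ℕ, m = (i : ℕ) := ⟨_, rfl⟩
    induction m generalizing i with
    | zero => omega
    | succ m ihm =>
        have hmN : m < N := by omega
        have hmv : ((⟨m, hmN⟩ : Fin N) : ℕ) = m := rfl
        have h1 : (⟨m, hmN⟩ : Fin N) < i := by rw [Fin.lt_def, hmv]; omega
        have h2 := hf h1
        have h3 := ihm ⟨m, hmN⟩ rfl
        rw [Fin.lt_def] at h2
        rw [hmv] at h3
        omega
  have hsymm : StrictMono ⇑η.symm := by
    intro a b hab
    rcases lt_trichotomy (η.symm a) (η.symm b) with hh | hh | hh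
    · exact hh
    · exact absurd (congrArg η hh) (by simp [Equiv.apply_symm_apply]; exact hab.ne)
    · exact absurd (h hh) (by simp [Equiv.apply_symm_apply]; exact hab.le)
  apply Equiv.ext
  intro i
  have h1 := hle η h i
  have h2 := hle η.symm hsymm (η i)
  rw [Equiv.symm_apply_apply] at h2
  exact Fin.ext (le_antisymm h2 h1)

lemma shuffles_zero (N : ℕ) : shuffles N 0 = {1} := by
  ext η
  rw [mem_shuffles, Finset.mem_singleton]
  constructor
  · intro hIs
    exact perm_eq_one_of_strictMono η (fun i j hij => hIs i j hij (Or.inr (Nat.zero_le _)))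
  · rintro rfl
    intro i j hij _
    simpa using hij

lemma shuffles_top (N : ℕ) : shuffles N N = {1} := by
  ext η
  rw [mem_shuffles, Finset.mem_singleton]
  constructor
  · intro hIs
    exact perm_eq_one_of_strictMono η (fun i j hij => hIs i j hij (Or.inl j.isLt))
  · rintro rfl
    intro i j hij _
    simpa using hij

end Comb
section Main

variable {E F G : Type*}
  [NormedAddCommGroup E] [NormedSpace ℝ E] [CompleteSpace E]
  [NormedAddCommGroup F] [NormedSpace ℝ F] [CompleteSpace F]
  [NormedAddCommGroup G] [NormedSpace ℝ G] [CompleteSpace G]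

lemma continuous_shuffle_integrand (B : E →L[ℝ] F →L[ℝ] G) {p q n : ℕ}
    {F₀ : (Fin p → ℝ) → E} (hF₀ : Continuous F₀)
    {G₀ : (Fin q → ℝ) → F} (hG₀ : Continuous G₀)
    (a : Fin p → Fin n) (b : Fin q → Fin n) :
    Continuous fun w : Fin n → ℝ => B (F₀ fun i => w (a i)) (G₀ fun j => w (b j)) := by
  have h1 : Continuous fun w : Fin n → ℝ => (fun i => w (a i) : Fin p → ℝ) :=
    continuous_pi fun i => continuous_apply (a i)
  have h2 : Continuous fun w : Fin n → ℝ => (fun j => w (b j) : Fin q → ℝ) :=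
    continuous_pi fun j => continuous_apply (b j)
  exact (B.continuous.comp (hF₀.comp h1)).clm_apply (hG₀.comp h2)

lemma shuffle_key (N : ℕ) : ∀ (p q : ℕ) (h : p + q = N) (B : E →L[ℝ] F →L[ℝ] G)
    (F₀ : (Fin p → ℝ) → E), Continuous F₀ → ∀ (G₀ : (Fin q → ℝ) → F), Continuous G₀ →
    ∀ (s t : ℝ),
    B (simplexIntegral p s t F₀) (simplexIntegral q s t G₀) =
      ∑ η ∈ shuffles N p, simplexIntegral N s t (fun w =>
        B (F₀ fun i => w (η (Fin.cast h (Fin.castAdd q i))))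
          (G₀ fun j => w (η (Fin.cast h (Fin.natAdd p j))))) := by
  induction N with
  | zero =>
      intro p q h B F₀ hF₀ G₀ hG₀ s t
      have hp : p = 0 := by omega
      subst hp
      have hq : q = 0 := by omega
      subst hq
      rw [shuffles_zero, Finset.sum_singleton, simplexIntegral_zero', simplexIntegral_zero',
        simplexIntegral_zero']
      have key : ∀ (v u : Fin 0 → ℝ), B (F₀ v) (G₀ u) = B (F₀ Fin.elim0) (G₀ Fin.elim0) := by
        intro v u
        rw [show v = Fin.elim0 from funext fun i => i.elim0,
          show u = Fin.elim0 from funext fun i => i.elim0]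
      exact (key _ _).symm
  | succ M ih =>
      intro p q h B F₀ hF₀ G₀ hG₀ s t
      rcases Nat.eq_zero_or_pos p with hp0 | hp0
      · -- p = 0
        subst hp0
        have hq : q = M + 1 := by omega
        subst hq
        rw [simplexIntegral_zero',
          map_simplexIntegral (B (F₀ Fin.elim0)) (M + 1) s t G₀ hG₀,
          shuffles_zero, Finset.sum_singleton]
        congr 1
        funext w
        have e1 : (fun i : Fin 0 =>
            w ((1 : Equiv.Perm (Fin (M + 1))) (Fin.cast h (Fin.castAdd (M + 1) i))))
            = Fin.elim0 := funext fun i => i.elim0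
        have e2 : (fun j : Fin (M + 1) =>
            w ((1 : Equiv.Perm (Fin (M + 1))) (Fin.cast h (Fin.natAdd 0 j)))) = w := by
          funext j
          apply congrArg w
          apply Fin.ext
          simp
        rw [e1, e2]
      rcases Nat.eq_zero_or_pos q with hq0 | hq0
      · -- q = 0
        subst hq0
        have hp' : p = M + 1 := by omega
        subst hp'
        rw [simplexIntegral_zero']
        rw [show B (simplexIntegral (M + 1) s t F₀) (G₀ Fin.elim0)
            = (B.flip (G₀ Fin.elim0)) (simplexIntegral (M + 1) s t F₀) from rfl,
          map_simplexIntegral (B.flip (G₀ Fin.elim0)) (M + 1) s t F₀ hF₀,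
          shuffles_top, Finset.sum_singleton]
        congr 1
        funext w
        have e1 : (fun i : Fin (M + 1) =>
            w ((1 : Equiv.Perm (Fin (M + 1))) (Fin.cast h (Fin.castAdd 0 i)))) = w := by
          funext i
          apply congrArg w
          apply Fin.ext
          simp
        have e2 : (fun j : Fin 0 =>
            w ((1 : Equiv.Perm (Fin (M + 1))) (Fin.cast h (Fin.natAdd (M + 1) j))))
            = Fin.elim0 := funext fun j => j.elim0
        rw [e1, e2]
        rfl
      -- main case : p = p' + 1, q = q' + 1
      obtain ⟨p', rfl⟩ : ∃ p', p = p' + 1 := ⟨p - 1, by omega⟩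
      obtain ⟨q', rfl⟩ : ∃ q', q = q' + 1 := ⟨q - 1, by omega⟩
      have h1 : p' + (q' + 1) = M := by omega
      have h2 : (p' + 1) + q' = M := by omega
      have hpM : p' + 1 < M + 1 := by omega
      -- derivative of the right-hand side
      have hR : ∀ u : ℝ, HasDerivAt (fun x : ℝ => ∑ η ∈ shuffles (M + 1) (p' + 1),
          simplexIntegral (M + 1) s x (fun w =>
            B (F₀ fun i => w (η (Fin.cast h (Fin.castAdd (q' + 1) i))))
              (G₀ fun j => w (η (Fin.cast h (Fin.natAdd (p' + 1) j))))))
          (∑ η ∈ shuffles (M + 1) (p' + 1), simplexIntegral M s u (fun w : Fin M → ℝ =>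
            B (F₀ fun i => (Fin.cons u w : Fin (M + 1) → ℝ) (η (Fin.cast h (Fin.castAdd (q' + 1) i))))
              (G₀ fun j => (Fin.cons u w : Fin (M + 1) → ℝ) (η (Fin.cast h (Fin.natAdd (p' + 1) j)))))) u := by
        intro u
        apply HasDerivAt.fun_sum
        intro η hη
        exact hasDerivAt_simplexIntegral M s _
          (continuous_shuffle_integrand B hF₀ hG₀ _ _) u
      -- derivative of the left-hand side
      have hL : ∀ u : ℝ, HasDerivAt (fun x : ℝ =>
          B (simplexIntegral (p' + 1) s x F₀) (simplexIntegral (q' + 1) s x G₀))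
          (B (simplexIntegral p' s u (fun ts => F₀ (Fin.cons u ts)))
              (simplexIntegral (q' + 1) s u G₀)
            + B (simplexIntegral (p' + 1) s u F₀)
              (simplexIntegral q' s u (fun ts => G₀ (Fin.cons u ts)))) u := by
        intro u
        have dF := hasDerivAt_simplexIntegral p' s F₀ hF₀ u
        have dG := hasDerivAt_simplexIntegral q' s G₀ hG₀ u
        have hc : HasDerivAt (fun x : ℝ => B (simplexIntegral (p' + 1) s x F₀))
            (B (simplexIntegral p' s u (fun ts => F₀ (Fin.cons u ts)))) u :=
          B.hasFDerivAt.comp_hasDerivAt u dF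
        exact hc.clm_apply dG
      -- the derivatives agree
      have key : ∀ u : ℝ,
          B (simplexIntegral p' s u (fun ts => F₀ (Fin.cons u ts)))
              (simplexIntegral (q' + 1) s u G₀)
            + B (simplexIntegral (p' + 1) s u F₀)
              (simplexIntegral q' s u (fun ts => G₀ (Fin.cons u ts)))
          = ∑ η ∈ shuffles (M + 1) (p' + 1), simplexIntegral M s u (fun w : Fin M → ℝ =>
              B (F₀ fun i => (Fin.cons u w : Fin (M + 1) → ℝ) (η (Fin.cast h (Fin.castAdd (q' + 1) i))))
                (G₀ fun j => (Fin.cons u w : Fin (M + 1) → ℝ) (η (Fin.cast h (Fin.natAdd (p' + 1) j))))) := by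
        intro u
        rw [ih p' (q' + 1) h1 B (fun ts => F₀ (Fin.cons u ts))
          (hF₀.comp (continuous_cons_right u)) G₀ hG₀ s u]
        rw [ih (p' + 1) q' h2 B F₀ hF₀ (fun ts => G₀ (Fin.cons u ts))
          (hG₀.comp (continuous_cons_right u)) s u]
        rw [← Finset.sum_filter_add_sum_filter_not (shuffles (M + 1) (p' + 1))
          (fun η => η 0 = 0)]
        rw [filter_not_zero_eq (Nat.succ_pos p') hpM]
        congr 1
        · -- first block : η 0 = 0
          rw [sum_shuffle_filter_eq (0 : Fin (M + 1))
            (fun σ hσ => isShuffle_extend_zero hσ)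
            (fun η hb h0 => isShuffle_shrink_zero hb h0)]
          apply Finset.sum_congr rfl
          intro σ hσ
          congr 1
          funext w
          have eF : (fun i : Fin (p' + 1) =>
              (Fin.cons u w : Fin (M + 1) → ℝ) (extendPerm 0 σ (Fin.cast h (Fin.castAdd (q' + 1) i))))
              = Fin.cons u (fun i => w (σ (Fin.cast h1 (Fin.castAdd (q' + 1) i)))) := by
            funext i
            refine Fin.cases ?_ ?_ i
            · have hz : Fin.cast h (Fin.castAdd (q' + 1) (0 : Fin (p' + 1)))
                  = (0 : Fin (M + 1)) := by
                apply Fin.ext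
                simp
              rw [hz, extendPerm_at]
              simp
            · intro i0
              have hs : Fin.cast h (Fin.castAdd (q' + 1) i0.succ)
                  = (Fin.cast h1 (Fin.castAdd (q' + 1) i0)).succ := by
                apply Fin.ext
                simp only [Fin.coe_cast, Fin.coe_castAdd, Fin.val_succ]
              rw [hs, ← Fin.zero_succAbove (Fin.cast h1 (Fin.castAdd (q' + 1) i0)),
                extendPerm_succAbove, Fin.cons_succ, Fin.cons_succ]
          have eG : (fun j : Fin (q' + 1) =>
              (Fin.cons u w : Fin (M + 1) → ℝ) (extendPerm 0 σ (Fin.cast h (Fin.natAdd (p' + 1) j))))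
              = (fun j => w (σ (Fin.cast h1 (Fin.natAdd p' j)))) := by
            funext j
            have hs : Fin.cast h (Fin.natAdd (p' + 1) j)
                = (Fin.cast h1 (Fin.natAdd p' j)).succ := by
              apply Fin.ext
              simp only [Fin.coe_cast, Fin.coe_natAdd, Fin.val_succ]
              omega
            rw [hs, ← Fin.zero_succAbove (Fin.cast h1 (Fin.natAdd p' j)),
              extendPerm_succAbove, Fin.cons_succ]
          rw [eF, eG]
        · -- second block : η ⟨p'+1⟩ = 0
          rw [sum_shuffle_filter_eq (⟨p' + 1, hpM⟩ : Fin (M + 1))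
            (fun σ hσ => isShuffle_extend_mid hpM hσ)
            (fun η hb h0 => isShuffle_shrink_mid hpM hb h0)]
          apply Finset.sum_congr rfl
          intro σ hσ
          congr 1
          funext w
          have eF : (fun i : Fin (p' + 1) =>
              (Fin.cons u w : Fin (M + 1) → ℝ) (extendPerm ⟨p' + 1, hpM⟩ σ (Fin.cast h (Fin.castAdd (q' + 1) i))))
              = (fun i => w (σ (Fin.cast h2 (Fin.castAdd q' i)))) := by
            funext i
            have hs : Fin.cast h (Fin.castAdd (q' + 1) i)
                = Fin.succAbove ⟨p' + 1, hpM⟩ (Fin.cast h2 (Fin.castAdd q' i)) := by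
              apply Fin.ext
              have hk : ((⟨p' + 1, hpM⟩ : Fin (M + 1)) : ℕ) = p' + 1 := rfl
              have hi := i.isLt
              rcases succAbove_val_cases (⟨p' + 1, hpM⟩ : Fin (M + 1))
                  (Fin.cast h2 (Fin.castAdd q' i)) with ⟨e1, e2⟩ | ⟨e1, e2⟩ <;>
                simp only [Fin.coe_cast, Fin.coe_castAdd, hk] at e1 e2 ⊢ <;> omega
            rw [hs, extendPerm_succAbove, Fin.cons_succ]
          have eG : (fun j : Fin (q' + 1) =>
              (Fin.cons u w : Fin (M + 1) → ℝ) (extendPerm ⟨p' + 1, hpM⟩ σ (Fin.cast h (Fin.natAdd (p' + 1) j))))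
              = Fin.cons u (fun j0 => w (σ (Fin.cast h2 (Fin.natAdd (p' + 1) j0)))) := by
            funext j
            refine Fin.cases ?_ ?_ j
            · have hz : Fin.cast h (Fin.natAdd (p' + 1) (0 : Fin (q' + 1)))
                  = (⟨p' + 1, hpM⟩ : Fin (M + 1)) := by
                apply Fin.ext
                simp
              rw [hz, extendPerm_at]
              simp
            · intro j0
              have hs : Fin.cast h (Fin.natAdd (p' + 1) j0.succ)
                  = Fin.succAbove ⟨p' + 1, hpM⟩ (Fin.cast h2 (Fin.natAdd (p' + 1) j0)) := by
                apply Fin.ext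
                have hk : ((⟨p' + 1, hpM⟩ : Fin (M + 1)) : ℕ) = p' + 1 := rfl
                rcases succAbove_val_cases (⟨p' + 1, hpM⟩ : Fin (M + 1))
                    (Fin.cast h2 (Fin.natAdd (p' + 1) j0)) with ⟨e1, e2⟩ | ⟨e1, e2⟩ <;>
                  simp only [Fin.coe_cast, Fin.coe_natAdd, Fin.val_succ, hk] at e1 e2 ⊢ <;> omega
              rw [hs, extendPerm_succAbove, Fin.cons_succ, Fin.cons_succ]
          rw [eF, eG]
      -- now conclude by the fundamental theorem of calculus
      have hL' : ∀ u : ℝ, HasDerivAt (fun x : ℝ =>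
          B (simplexIntegral (p' + 1) s x F₀) (simplexIntegral (q' + 1) s x G₀))
          (∑ η ∈ shuffles (M + 1) (p' + 1), simplexIntegral M s u (fun w : Fin M → ℝ =>
            B (F₀ fun i => (Fin.cons u w : Fin (M + 1) → ℝ) (η (Fin.cast h (Fin.castAdd (q' + 1) i))))
              (G₀ fun j => (Fin.cons u w : Fin (M + 1) → ℝ) (η (Fin.cast h (Fin.natAdd (p' + 1) j)))))) u :=
        fun u => key u ▸ hL u
      have hsub : ∀ u : ℝ, HasDerivAt (fun x : ℝ =>
          B (simplexIntegral (p' + 1) s x F₀) (simplexIntegral (q' + 1) s x G₀)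
            - ∑ η ∈ shuffles (M + 1) (p' + 1), simplexIntegral (M + 1) s x (fun w =>
              B (F₀ fun i => w (η (Fin.cast h (Fin.castAdd (q' + 1) i))))
                (G₀ fun j => w (η (Fin.cast h (Fin.natAdd (p' + 1) j)))))) 0 u :=
        fun u => by have := (hL' u).sub (hR u); rw [sub_self] at this; exact this
      have hconst := is_const_of_deriv_eq_zero (𝕜 := ℝ)
        (f := fun x : ℝ =>
          B (simplexIntegral (p' + 1) s x F₀) (simplexIntegral (q' + 1) s x G₀)
            - ∑ η ∈ shuffles (M + 1) (p' + 1), simplexIntegral (M + 1) s x (fun w =>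
              B (F₀ fun i => w (η (Fin.cast h (Fin.castAdd (q' + 1) i))))
                (G₀ fun j => w (η (Fin.cast h (Fin.natAdd (p' + 1) j))))))
        (fun u => (hsub u).differentiableAt) (fun u => (hsub u).deriv) t s
      have hLs : B (simplexIntegral (p' + 1) s s F₀) (simplexIntegral (q' + 1) s s G₀) = 0 := by
        rw [simplexIntegral_same]
        simp
      have hRs : (∑ η ∈ shuffles (M + 1) (p' + 1), simplexIntegral (M + 1) s s (fun w =>
          B (F₀ fun i => w (η (Fin.cast h (Fin.castAdd (q' + 1) i))))
            (G₀ fun j => w (η (Fin.cast h (Fin.natAdd (p' + 1) j)))))) = 0 :=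
        Finset.sum_eq_zero fun η _ => simplexIntegral_same M s _
      have hfin : B (simplexIntegral (p' + 1) s t F₀) (simplexIntegral (q' + 1) s t G₀)
          - ∑ η ∈ shuffles (M + 1) (p' + 1), simplexIntegral (M + 1) s t (fun w =>
            B (F₀ fun i => w (η (Fin.cast h (Fin.castAdd (q' + 1) i))))
              (G₀ fun j => w (η (Fin.cast h (Fin.natAdd (p' + 1) j))))) = 0 := by
        rw [hconst, hLs, hRs, sub_zero]
      exact sub_eq_zero.mp hfin

end Main

theorem simplexIntegral_shuffle_product {E F G : Type*}
    [NormedAddCommGroup E] [NormedSpace ℂ E] [CompleteSpace E]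
    [NormedAddCommGroup F] [NormedSpace ℂ F] [CompleteSpace F]
    [NormedAddCommGroup G] [NormedSpace ℂ G] [CompleteSpace G]
    (B : E →L[ℂ] F →L[ℂ] G) (p q : ℕ) (hp : 1 ≤ p) (hq : 1 ≤ q)
    (F₀ : (Fin p → ℝ) → E) (hF₀ : Continuous F₀)
    (G₀ : (Fin q → ℝ) → F) (hG₀ : Continuous G₀)
    (s t : ℝ) (hst : s ≤ t) :
    B (simplexIntegral p s t F₀) (simplexIntegral q s t G₀) =
      ∑ η ∈ shuffles (p + q) p,
        simplexIntegral (p + q) s t (fun w =>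
          B (F₀ fun i => w (η (Fin.castAdd q i)))
            (G₀ fun j => w (η (Fin.natAdd p j)))) := by
  exact shuffle_key (p + q) p q rfl
    ((ContinuousLinearMap.restrictScalarsL ℂ F G ℝ ℝ).comp (B.restrictScalars ℝ))
    F₀ hF₀ G₀ hG₀ s t
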